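/- arXiv:1402.6485 — 3 statements merged into one kernel-verified Lean document; each statement's English description precedes it below -/
import Mathlib

section
/- Let F be a CNF formula whose clauses and variables admit an interval ordering, i.e., a linear order < on cla(F) ∪ var(F) such that for every variable x occurring in clause C: if x < C then every variable y with x < y < C occurs in C, and if C < x then x occurs in every clause D with C < D < x. Then the incidence graph I(F) has no induced cycle of length at least 6. -/
/-- A clause is a finite set of literals; a literal is a variable paired with a polarity. -/
def occursIn {V : Type*} (x : V) (C : Finset (V × Bool)) : Prop := ∃ b, (x, b) ∈ C

/-- An assignment `τ` satisfies the clause `C` restricted to the variable set `X`. -/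
def satisfiesOn {V : Type*} (τ : V → Bool) (C : Finset (V × Bool)) (X : Set V) : Prop :=
  ∃ l ∈ C, l.1 ∈ X ∧ τ l.1 = l.2

/-- The set of (indices of) clauses of the subformula `F_{D,X}` satisfied by `τ`. -/
def satA {V ι : Type*} (F : ι → Finset (V × Bool)) (τ : V → Bool) (D : Set ι) (X : Set V) :
    Set ι := {i | i ∈ D ∧ satisfiesOn τ (F i) X}

/-- Precisely satisfiable clause-sets of the subformula `F_{D,X}`. -/
def PSA {V ι : Type*} (F : ι → Finset (V × Bool)) (D : Set ι) (X : Set V) : Set (Set ι) :=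
  {s | ∃ τ : V → Bool, satA F τ D X = s}

/-- Clauses of `F` satisfied by the complete assignment `τ`. -/
def satF {V ι : Type*} (F : ι → Finset (V × Bool)) (τ : V → Bool) : Set ι :=
  satA F τ Set.univ Set.univ

/-- The family of precisely satisfiable clause-sets of `F`. -/
def PS {V ι : Type*} (F : ι → Finset (V × Bool)) : Set (Set ι) := PSA F Set.univ Set.univ

/-- The incidence graph of a CNF formula. -/
def incidence {V ι : Type*} (F : ι → Finset (V × Bool)) : SimpleGraph (ι ⊕ V) where
  Adj a b := (∃ i x, a = Sum.inl i ∧ b = Sum.inr x ∧ occursIn x (F i)) ∨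
             (∃ i x, b = Sum.inl i ∧ a = Sum.inr x ∧ occursIn x (F i))
  symm := by
    constructor
    rintro a b (⟨i, x, h1, h2, h3⟩ | ⟨i, x, h1, h2, h3⟩)
    · exact Or.inr ⟨i, x, h1, h2, h3⟩
    · exact Or.inl ⟨i, x, h1, h2, h3⟩
  loopless := by constructor; rintro a (⟨i, x, h1, h2, _⟩ | ⟨i, x, h1, h2, _⟩) <;> simp_all

/-- The bigraph bipartization `G[A, Ā]`: keep only edges with exactly one endpoint in `A`. -/
def bipartize {α : Type*} (G : SimpleGraph α) (A : Set α) : SimpleGraph α where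
  Adj a b := G.Adj a b ∧ ((a ∈ A ∧ b ∉ A) ∨ (b ∈ A ∧ a ∉ A))
  symm := by constructor; intro a b h; exact ⟨h.1.symm, h.2.symm⟩
  loopless := by constructor; intro a h; exact G.irrefl h.1

/-- `M` is an induced matching of the graph `G` (edges recorded as ordered pairs). -/
def IsIM {α : Type*} (G : SimpleGraph α) (M : Finset (α × α)) : Prop :=
  (∀ p ∈ M, G.Adj p.1 p.2) ∧
  ∀ p ∈ M, ∀ q ∈ M, p ≠ q →
    p.1 ≠ q.1 ∧ p.1 ≠ q.2 ∧ p.2 ≠ q.1 ∧ p.2 ≠ q.2 ∧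
    ¬ G.Adj p.1 q.1 ∧ ¬ G.Adj p.1 q.2 ∧ ¬ G.Adj p.2 q.1 ∧ ¬ G.Adj p.2 q.2

/-- Rooted binary trees with leaves labelled by `α`. -/
inductive BTree (α : Type u) : Type u
  | leaf : α → BTree α
  | node : BTree α → BTree α → BTree α

namespace BTree

def leaves {α : Type*} : BTree α → List α
  | leaf a => [a]
  | node l r => l.leaves ++ r.leaves

/-- The cuts of a branch decomposition: for every node of the tree, the set of labels of
leaves below it. -/
def cuts {α : Type*} : BTree α → List (Set α)
  | leaf a => [{a}]
  | node l r => {a | a ∈ l.leaves ∨ a ∈ r.leaves} :: (l.cuts ++ r.cuts)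

def map {α β : Type*} (f : α → β) : BTree α → BTree β
  | leaf a => leaf (f a)
  | node l r => node (l.map f) (r.map f)

end BTree

/-- `T` is a branch decomposition of the whole type `α`: its leaves are in bijection with `α`. -/
def IsBD {α : Type*} (T : BTree α) : Prop := T.leaves.Nodup ∧ ∀ a : α, a ∈ T.leaves

/-- The `ps`-value of a cut `S ⊆ cla(F) ⊕ var(F)` of the formula `F`. -/
noncomputable def psVal {V ι : Type*} (F : ι → Finset (V × Bool)) (S : Set (ι ⊕ V)) : ℕ :=
  max (PSA F {i | Sum.inl i ∉ S} {x | Sum.inr x ∈ S}).ncard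
      (PSA F {i | Sum.inl i ∈ S} {x | Sum.inr x ∉ S}).ncard

/-- The `ps`-width of the formula `F`. -/
noncomputable def psw {V ι : Type*} (F : ι → Finset (V × Bool)) : ℕ :=
  sInf {k | ∃ T : BTree (ι ⊕ V), IsBD T ∧ ∀ S ∈ T.cuts, psVal F S ≤ k}

/-- The MIM-width of a graph. -/
noncomputable def mimw {α : Type*} (G : SimpleGraph α) : ℕ :=
  sInf {k | ∃ T : BTree α, IsBD T ∧
    ∀ S ∈ T.cuts, ∀ M : Finset (α × α), IsIM (bipartize G S) M → M.card ≤ k}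

/-- if `F` has an interval ordering then `I(F)` has no induced cycle of
length at least 6. -/
theorem stmt13 {V ι : Type*} (F : ι → Finset (V × Bool)) (ord : ι ⊕ V → ℕ)
    (hinj : Function.Injective ord)
    (h1 : ∀ (x : V) (i : ι), occursIn x (F i) → ord (Sum.inr x) < ord (Sum.inl i) →
      ∀ y : V, ord (Sum.inr x) < ord (Sum.inr y) → ord (Sum.inr y) < ord (Sum.inl i) →
        occursIn y (F i))
    (h2 : ∀ (x : V) (i : ι), occursIn x (F i) → ord (Sum.inl i) < ord (Sum.inr x) →
      ∀ j : ι, ord (Sum.inl i) < ord (Sum.inl j) → ord (Sum.inl j) < ord (Sum.inr x) →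
        occursIn x (F j)) :
    ¬ ∃ (n : ℕ) (_ : 6 ≤ n) (c : ZMod n → ι ⊕ V), Function.Injective c ∧
      (∀ m : ZMod n, (incidence F).Adj (c m) (c (m + 1))) ∧
      (∀ m m' : ZMod n, m' ≠ m → m' ≠ m + 1 → m ≠ m' + 1 →
        ¬ (incidence F).Adj (c m) (c m')) := by
  
  rintro ⟨n, hn6, c, hinjc, hadj, hind⟩
  haveI : NeZero n := ⟨by omega⟩
  -- key lemma: if p is adjacent to q and r (so q, r are on the same side), q is adjacent
  -- to s, and ord q < ord r < ord s, then r is adjacent to s.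
  have key : ∀ p q r s : ι ⊕ V, (incidence F).Adj p q → (incidence F).Adj p r →
      (incidence F).Adj q s → ord q < ord r → ord r < ord s → (incidence F).Adj r s := by
    rintro p q r s hpq hpr hqs hqr hrs
    rcases hpq with ⟨i, x, hp, hq, -⟩ | ⟨i, x, hq, hp, -⟩
    · -- p = inl i, q = inr x
      subst hp; subst hq
      obtain ⟨y, hr⟩ : ∃ y, r = Sum.inr y := by
        rcases hpr with ⟨i', y, -, hr, -⟩ | ⟨i', y, -, h', -⟩
        · exact ⟨y, hr⟩
        · simp at h'
      subst hr
      obtain ⟨j, hs, hxj⟩ : ∃ j, s = Sum.inl j ∧ occursIn x (F j) := by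
        rcases hqs with ⟨i', z, h', -, -⟩ | ⟨j, z, hs, h', hz⟩
        · simp at h'
        · obtain rfl : z = x := by simpa using h'.symm
          exact ⟨j, hs, hz⟩
      subst hs
      exact Or.inr ⟨j, y, rfl, rfl, h1 x j hxj (hqr.trans hrs) y hqr hrs⟩
    · -- p = inr x, q = inl i
      subst hp; subst hq
      obtain ⟨j, hr⟩ : ∃ j, r = Sum.inl j := by
        rcases hpr with ⟨i', y, h', -, -⟩ | ⟨j, y, hr, -, -⟩
        · simp at h'
        · exact ⟨j, hr⟩
      subst hr
      obtain ⟨z, hs, hz⟩ : ∃ z, s = Sum.inr z ∧ occursIn z (F i) := by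
        rcases hqs with ⟨i', z, h', hs, hz⟩ | ⟨j', z, -, h', -⟩
        · obtain rfl : i' = i := by simpa using h'.symm
          exact ⟨z, hs, hz⟩
        · simp at h'
      subst hs
      exact Or.inl ⟨j, z, rfl, rfl, h2 z i hz (hqr.trans hrs) j hqr hrs⟩
  -- choose the position m where ord (c m) is minimal
  obtain ⟨m, -, hm⟩ := Finset.exists_min_image (Finset.univ : Finset (ZMod n))
    (fun k => ord (c k)) ⟨0, Finset.mem_univ 0⟩
  have hmin : ∀ k : ZMod n, k ≠ m → ord (c m) < ord (c k) := by
    intro k hk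
    refine lt_of_le_of_ne (hm k (Finset.mem_univ k)) (fun h => hk ?_)
    exact hinjc (hinj h.symm)
  -- disequalities in ZMod n
  have hne : ∀ d : ℕ, 0 < d → d < n → ((d : ZMod n) ≠ 0) := by
    intro d hd1 hd2 h
    rw [ZMod.natCast_eq_zero_iff] at h
    have := Nat.le_of_dvd hd1 h
    omega
  have d1 : ((1 : ℕ) : ZMod n) ≠ 0 := hne 1 (by omega) (by omega)
  have d2 : ((2 : ℕ) : ZMod n) ≠ 0 := hne 2 (by omega) (by omega)
  have d3 : ((3 : ℕ) : ZMod n) ≠ 0 := hne 3 (by omega) (by omega)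
  have d4 : ((4 : ℕ) : ZMod n) ≠ 0 := hne 4 (by omega) (by omega)
  -- adjacencies around m
  have hA : (incidence F).Adj (c (m - 1)) (c m) := by
    have := hadj (m - 1); rwa [sub_add_cancel] at this
  have hW1 : (incidence F).Adj (c (m - 2)) (c (m - 1)) := by
    have := hadj (m - 2)
    have e : m - 2 + 1 = m - 1 := by ring
    rwa [e] at this
  have hB : (incidence F).Adj (c m) (c (m + 1)) := hadj m
  have hW2 : (incidence F).Adj (c (m + 1)) (c (m + 2)) := by
    have := hadj (m + 1)
    have e : m + 1 + 1 = m + 2 := by ring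
    rwa [e] at this
  -- non-adjacencies
  have hNA1 : ¬ (incidence F).Adj (c (m - 2)) (c (m + 1)) := by
    refine hind (m - 2) (m + 1) ?_ ?_ ?_
    · intro h; exact d3 (by push_cast; linear_combination h)
    · intro h; exact d2 (by push_cast; linear_combination h)
    · intro h; exact d4 (by push_cast; linear_combination -h)
  have hNA2 : ¬ (incidence F).Adj (c (m + 2)) (c (m - 1)) := by
    refine hind (m + 2) (m - 1) ?_ ?_ ?_
    · intro h; exact d3 (by push_cast; linear_combination -h)
    · intro h; exact d4 (by push_cast; linear_combination -h)
    · intro h; exact d2 (by push_cast; linear_combination h)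
  -- strict minimality facts
  have humA : ord (c m) < ord (c (m - 1)) := hmin _ (fun h => d1 (by push_cast; linear_combination -h))
  have humB : ord (c m) < ord (c (m + 1)) := hmin _ (fun h => d1 (by push_cast; linear_combination h))
  have humW1 : ord (c m) < ord (c (m - 2)) := hmin _ (fun h => d2 (by push_cast; linear_combination -h))
  have humW2 : ord (c m) < ord (c (m + 2)) := hmin _ (fun h => d2 (by push_cast; linear_combination h))
  have hAB : ord (c (m - 1)) ≠ ord (c (m + 1)) := by
    intro h
    have : (m - 1 : ZMod n) = m + 1 := hinjc (hinj h)
    exact d2 (by push_cast; linear_combination -this)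
  rcases hAB.lt_or_gt with hlt | hlt
  · -- ord (c (m-1)) < ord (c (m+1)); use w = c (m-2)
    have hW1B : ord (c (m - 2)) ≠ ord (c (m + 1)) := by
      intro h
      have : (m - 2 : ZMod n) = m + 1 := hinjc (hinj h)
      exact d3 (by push_cast; linear_combination -this)
    have hBW1 : ord (c (m + 1)) < ord (c (m - 2)) := by
      rcases hW1B.lt_or_gt with h | h
      · exact absurd (key (c (m - 1)) (c m) (c (m - 2)) (c (m + 1))
          hA hW1.symm hB humW1 h) hNA1
      · exact h
    have hAW1 : ord (c (m - 1)) < ord (c (m - 2)) := hlt.trans hBW1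
    exact hNA1 (key (c m) (c (m - 1)) (c (m + 1)) (c (m - 2))
      hA.symm hB hW1.symm hlt hBW1).symm
  · -- ord (c (m+1)) < ord (c (m-1)); use w = c (m+2)
    have hW2A : ord (c (m + 2)) ≠ ord (c (m - 1)) := by
      intro h
      have : (m + 2 : ZMod n) = m - 1 := hinjc (hinj h)
      exact d3 (by push_cast; linear_combination this)
    have hAW2 : ord (c (m - 1)) < ord (c (m + 2)) := by
      rcases hW2A.lt_or_gt with h | h
      · exact absurd (key (c (m + 1)) (c m) (c (m + 2)) (c (m - 1))
          hB.symm hW2 hA.symm humW2 h) hNA2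
      · exact h
    exact hNA2 (key (c m) (c (m + 1)) (c (m - 1)) (c (m + 2))
      hB hA.symm hW2 hlt hAW2).symm
end

section
/- Every interval graph G admits a linear branch decomposition of MIM-width at most 1; i.e., ordering the vertices by left endpoints of their intervals, every prefix cut (P, V(G)\P) has maximum induced matching size at most 1 in the bipartite cut graph G[P, V(G)\P]. -/
/-- ordering an interval graph by left endpoints, every prefix cut has maximum
induced matching size at most 1. -/
theorem stmt17 {α : Type*} (G : SimpleGraph α) (l r : α → ℝ)
    (hlr : ∀ a, l a ≤ r a)
    (hAdj : ∀ a b, G.Adj a b ↔ a ≠ b ∧ l a ≤ r b ∧ l b ≤ r a)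
    (P : Set α) (hP : ∀ a b, l a ≤ l b → b ∈ P → a ∈ P) :
    ¬ ∃ a1 b1 a2 b2 : α, a1 ∈ P ∧ a2 ∈ P ∧ b1 ∉ P ∧ b2 ∉ P ∧
      G.Adj a1 b1 ∧ G.Adj a2 b2 ∧ ¬ G.Adj a1 b2 ∧ ¬ G.Adj a2 b1 := by
  rintro ⟨a1, b1, a2, b2, ha1, ha2, hb1, hb2, h11, h22, h12, h21⟩
  have key : ∀ a b, a ∈ P → b ∉ P → l a < l b := by
    intro a b ha hb
    by_contra h
    push_neg at h
    exact hb (hP b a h ha)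
  have h1 := (hAdj a1 b1).mp h11
  have h2 := (hAdj a2 b2).mp h22
  have n12 : ¬(a1 ≠ b2 ∧ l a1 ≤ r b2 ∧ l b2 ≤ r a1) := fun h => h12 ((hAdj a1 b2).mpr h)
  have n21 : ¬(a2 ≠ b1 ∧ l a2 ≤ r b1 ∧ l b1 ≤ r a2) := fun h => h21 ((hAdj a2 b1).mpr h)
  have ne12 : a1 ≠ b2 := fun h => hb2 (h ▸ ha1)
  have ne21 : a2 ≠ b1 := fun h => hb1 (h ▸ ha2)
  have l12 : l a1 ≤ r b2 := le_trans (key a1 b2 ha1 hb2).le (hlr b2)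
  have l21 : l a2 ≤ r b1 := le_trans (key a2 b1 ha2 hb1).le (hlr b1)
  push_neg at n12 n21
  have c1 := n12 ne12 l12
  have c2 := n21 ne21 l21
  linarith [h1.2.1, h1.2.2, h2.2.1, h2.2.2]
end

section
/- Every circular arc graph G admits a linear branch decomposition of MIM-width at most 2: there is a linear order of V(G) (by a starting endpoint of each arc, beginning at a fixed point on the circle) such that for every prefix P, the bipartite cut graph G[P, V(G)\P] has no induced matching of size 3. -/
/-- If two arcs intersect, one contains the start point of the other. -/
private lemma arc_cases' (sa ta sb tb : ℝ)
    (h : ∃ x : ℝ, (∃ m : ℤ, sa ≤ x + m ∧ x + m ≤ sa + ta) ∧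
      (∃ m : ℤ, sb ≤ x + m ∧ x + m ≤ sb + tb)) :
    (∃ n : ℤ, sa ≤ sb + n ∧ sb + n ≤ sa + ta) ∨
    (∃ n : ℤ, sb ≤ sa + n ∧ sa + n ≤ sb + tb) := by
  obtain ⟨x, ⟨m, h1, h2⟩, ⟨m', h3, h4⟩⟩ := h
  by_cases hc : sa ≤ sb + ((m - m' : ℤ) : ℝ)
  · left; exact ⟨m - m', by push_cast; push_cast at hc; linarith, by push_cast; linarith⟩
  · right
    refine ⟨m' - m, ?_, ?_⟩ <;> push_cast <;> push_cast at hc <;> linarith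

private lemma keyF (sa1 ta1 sb1 sa2 ta2 sb2 : ℝ)
    (h1 : 0 ≤ sa1) (h2 : 0 ≤ sa2) (h3 : sb1 < 1) (h4 : sb2 < 1)
    (c21 : sa2 < sb1) (c12 : sa1 < sb2)
    (F1 : ∃ n : ℤ, sa1 ≤ sb1 + n ∧ sb1 + n ≤ sa1 + ta1)
    (F2 : ∃ n : ℤ, sa2 ≤ sb2 + n ∧ sb2 + n ≤ sa2 + ta2) :
    (∃ n : ℤ, sa2 ≤ sb1 + n ∧ sb1 + n ≤ sa2 + ta2) ∨
    (∃ n : ℤ, sa1 ≤ sb2 + n ∧ sb2 + n ≤ sa1 + ta1) := by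
  by_cases hbb : sb1 ≤ sb2
  · obtain ⟨m, hm1, hm2⟩ := F2
    have hm : (-1 : ℝ) < (m : ℝ) := by linarith
    have hm0 : (0 : ℤ) ≤ m := by
      have : (-1 : ℤ) < m := by exact_mod_cast hm
      omega
    have hm0' : (0 : ℝ) ≤ (m : ℝ) := by exact_mod_cast hm0
    exact Or.inl ⟨m, by linarith, by linarith⟩
  · obtain ⟨m, hm1, hm2⟩ := F1
    have hm : (-1 : ℝ) < (m : ℝ) := by linarith
    have hm0 : (0 : ℤ) ≤ m := by
      have : (-1 : ℤ) < m := by exact_mod_cast hm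
      omega
    have hm0' : (0 : ℝ) ≤ (m : ℝ) := by exact_mod_cast hm0
    exact Or.inr ⟨m, by linarith, by linarith⟩

private lemma keyB (sa1 sb1 tb1 sa2 sb2 tb2 : ℝ)
    (h1 : 0 ≤ sa1) (h2 : 0 ≤ sa2) (h3 : sb1 < 1) (h4 : sb2 < 1)
    (c11 : sa1 < sb1) (c22 : sa2 < sb2)
    (B1 : ∃ n : ℤ, sb1 ≤ sa1 + n ∧ sa1 + n ≤ sb1 + tb1)
    (B2 : ∃ n : ℤ, sb2 ≤ sa2 + n ∧ sa2 + n ≤ sb2 + tb2) :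
    (∃ n : ℤ, sb2 ≤ sa1 + n ∧ sa1 + n ≤ sb2 + tb2) ∨
    (∃ n : ℤ, sb1 ≤ sa2 + n ∧ sa2 + n ≤ sb1 + tb1) := by
  by_cases haa : sa1 ≤ sa2
  · obtain ⟨m, hm1, hm2⟩ := B2
    have hm : (0 : ℝ) < (m : ℝ) := by linarith
    have hm0 : (1 : ℤ) ≤ m := by
      have : (0 : ℤ) < m := by exact_mod_cast hm
      omega
    have hm0' : (1 : ℝ) ≤ (m : ℝ) := by exact_mod_cast hm0
    exact Or.inl ⟨m, by linarith, by linarith⟩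
  · obtain ⟨m, hm1, hm2⟩ := B1
    have hm : (0 : ℝ) < (m : ℝ) := by linarith
    have hm0 : (1 : ℤ) ≤ m := by
      have : (0 : ℤ) < m := by exact_mod_cast hm
      omega
    have hm0' : (1 : ℝ) ≤ (m : ℝ) := by exact_mod_cast hm0
    exact Or.inr ⟨m, by linarith, by linarith⟩

/-- ordering a circular arc graph by starting points of the arcs, every prefix cut
has no induced matching of size 3. -/
theorem stmt18 {α : Type*} (G : SimpleGraph α) (s t : α → ℝ)
    (hs : ∀ a, 0 ≤ s a ∧ s a < 1) (ht : ∀ a, 0 ≤ t a)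
    (hAdj : ∀ a b, G.Adj a b ↔ a ≠ b ∧ ∃ x : ℝ,
      (∃ m : ℤ, s a ≤ x + m ∧ x + m ≤ s a + t a) ∧
      (∃ m : ℤ, s b ≤ x + m ∧ x + m ≤ s b + t b))
    (P : Set α) (hP : ∀ a b, s a ≤ s b → b ∈ P → a ∈ P) :
    ¬ ∃ a1 b1 a2 b2 a3 b3 : α,
      a1 ∈ P ∧ a2 ∈ P ∧ a3 ∈ P ∧ b1 ∉ P ∧ b2 ∉ P ∧ b3 ∉ P ∧
      G.Adj a1 b1 ∧ G.Adj a2 b2 ∧ G.Adj a3 b3 ∧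
      ¬ G.Adj a1 b2 ∧ ¬ G.Adj a1 b3 ∧ ¬ G.Adj a2 b1 ∧ ¬ G.Adj a2 b3 ∧
      ¬ G.Adj a3 b1 ∧ ¬ G.Adj a3 b2 := by
  
  rintro ⟨a1, b1, a2, b2, a3, b3, ha1, ha2, ha3, hb1, hb2, hb3,
    e1, e2, e3, n12, n13, n21, n23, n31, n32⟩
  have cross : ∀ a b, a ∈ P → b ∉ P → s a < s b := fun a b haP hbP =>
    lt_of_not_ge fun h => hbP (hP b a h haP)
  have adjF : ∀ a b, a ∈ P → b ∉ P →
      (∃ n : ℤ, s a ≤ s b + n ∧ s b + n ≤ s a + t a) → G.Adj a b := by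
    rintro a b haP hbP ⟨n, hn1, hn2⟩
    refine (hAdj a b).2 ⟨fun h => hbP (h ▸ haP), s b, ⟨n, hn1, hn2⟩, ⟨0, ?_, ?_⟩⟩
    · push_cast; linarith
    · push_cast; linarith [ht b]
  have adjB : ∀ a b, a ∈ P → b ∉ P →
      (∃ n : ℤ, s b ≤ s a + n ∧ s a + n ≤ s b + t b) → G.Adj a b := by
    rintro a b haP hbP ⟨n, hn1, hn2⟩
    refine (hAdj a b).2 ⟨fun h => hbP (h ▸ haP), s a, ⟨0, ?_, ?_⟩, ⟨n, hn1, hn2⟩⟩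
    · push_cast; linarith
    · push_cast; linarith [ht a]
  have c11 := cross a1 b1 ha1 hb1
  have c12 := cross a1 b2 ha1 hb2
  have c13 := cross a1 b3 ha1 hb3
  have c21 := cross a2 b1 ha2 hb1
  have c22 := cross a2 b2 ha2 hb2
  have c23 := cross a2 b3 ha2 hb3
  have c31 := cross a3 b1 ha3 hb1
  have c32 := cross a3 b2 ha3 hb2
  have c33 := cross a3 b3 ha3 hb3
  have d1 := arc_cases' (s a1) (t a1) (s b1) (t b1) ((hAdj a1 b1).1 e1).2
  have d2 := arc_cases' (s a2) (t a2) (s b2) (t b2) ((hAdj a2 b2).1 e2).2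
  have d3 := arc_cases' (s a3) (t a3) (s b3) (t b3) ((hAdj a3 b3).1 e3).2
  rcases d1 with F1 | B1 <;> rcases d2 with F2 | B2 <;> rcases d3 with F3 | B3
  · rcases keyF (s a1) (t a1) (s b1) (s a2) (t a2) (s b2)
      (hs a1).1 (hs a2).1 (hs b1).2 (hs b2).2 c21 c12 F1 F2 with h | h
    · exact n21 (adjF a2 b1 ha2 hb1 h)
    · exact n12 (adjF a1 b2 ha1 hb2 h)
  · rcases keyF (s a1) (t a1) (s b1) (s a2) (t a2) (s b2)
      (hs a1).1 (hs a2).1 (hs b1).2 (hs b2).2 c21 c12 F1 F2 with h | h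
    · exact n21 (adjF a2 b1 ha2 hb1 h)
    · exact n12 (adjF a1 b2 ha1 hb2 h)
  · rcases keyF (s a1) (t a1) (s b1) (s a3) (t a3) (s b3)
      (hs a1).1 (hs a3).1 (hs b1).2 (hs b3).2 c31 c13 F1 F3 with h | h
    · exact n31 (adjF a3 b1 ha3 hb1 h)
    · exact n13 (adjF a1 b3 ha1 hb3 h)
  · rcases keyB (s a2) (s b2) (t b2) (s a3) (s b3) (t b3)
      (hs a2).1 (hs a3).1 (hs b2).2 (hs b3).2 c22 c33 B2 B3 with h | h
    · exact n23 (adjB a2 b3 ha2 hb3 h)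
    · exact n32 (adjB a3 b2 ha3 hb2 h)
  · rcases keyF (s a2) (t a2) (s b2) (s a3) (t a3) (s b3)
      (hs a2).1 (hs a3).1 (hs b2).2 (hs b3).2 c32 c23 F2 F3 with h | h
    · exact n32 (adjF a3 b2 ha3 hb2 h)
    · exact n23 (adjF a2 b3 ha2 hb3 h)
  · rcases keyB (s a1) (s b1) (t b1) (s a3) (s b3) (t b3)
      (hs a1).1 (hs a3).1 (hs b1).2 (hs b3).2 c11 c33 B1 B3 with h | h
    · exact n13 (adjB a1 b3 ha1 hb3 h)
    · exact n31 (adjB a3 b1 ha3 hb1 h)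
  · rcases keyB (s a1) (s b1) (t b1) (s a2) (s b2) (t b2)
      (hs a1).1 (hs a2).1 (hs b1).2 (hs b2).2 c11 c22 B1 B2 with h | h
    · exact n12 (adjB a1 b2 ha1 hb2 h)
    · exact n21 (adjB a2 b1 ha2 hb1 h)
  · rcases keyB (s a1) (s b1) (t b1) (s a2) (s b2) (t b2)
      (hs a1).1 (hs a2).1 (hs b1).2 (hs b2).2 c11 c22 B1 B2 with h | h
    · exact n12 (adjB a1 b2 ha1 hb2 h)
    · exact n21 (adjB a2 b1 ha2 hb1 h)
end
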